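/- arXiv:1712.01107 — 3 statements merged into one kernel-verified Lean document; each statement's English description precedes it below -/
import Mathlib

section
/- Fix integers m and n with n ≠ 0, and define s(m) = (-(n+2m)^2 + n) / (2^5·7·n) as a rational number. Then the function k ↦ s(m + 56nk) on natural numbers takes infinitely many distinct values; in particular there is a strictly injective subsequence of values. -/
/-- For fixed `m, n` with `n ≠ 0` and `s(x) = (-(n+2x)^2 + n)/(2^5·7·n)`, the
function `k ↦ s(m + 56nk)` takes infinitely many distinct values, and there is
a strictly monotone subsequence along which the values are pairwise distinct. -/
theorem stmt6 (m n : ℤ) (hn : n ≠ 0) (s : ℤ → ℚ)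
    (hs : ∀ x : ℤ, s x = ((-(n + 2 * x) ^ 2 + n : ℤ) : ℚ) / ((2 ^ 5 * 7 * n : ℤ) : ℚ)) :
    (Set.range fun k : ℕ => s (m + 56 * n * k)).Infinite ∧
      ∃ φ : ℕ → ℕ, StrictMono φ ∧
        Function.Injective fun k : ℕ => s (m + 56 * n * (φ k)) := by
  have ha : ∃ A : ℤ, A = |2 * (n + 2 * m)| := ⟨_, rfl⟩
  obtain ⟨A, hA⟩ := ha
  have hA0 : 0 ≤ A := hA ▸ abs_nonneg _
  obtain ⟨N, hNZ⟩ : ∃ N : ℕ, (N : ℤ) = A + 1 :=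
    ⟨A.toNat + 1, by push_cast [Int.toNat_of_nonneg hA0]; ring⟩
  have hd : ((2 ^ 5 * 7 * n : ℤ) : ℚ) ≠ 0 := by
    exact_mod_cast mul_ne_zero (by norm_num) hn
  have hinj : Function.Injective fun k : ℕ => s (m + 56 * n * ((k + N : ℕ) : ℤ)) := by
    intro k k' h
    simp only [hs] at h
    rw [div_eq_div_iff hd hd] at h
    have h2 : (-(n + 2 * (m + 56 * n * ((k : ℤ) + N))) ^ 2 + n) * (2 ^ 5 * 7 * n)
        = (-(n + 2 * (m + 56 * n * ((k' : ℤ) + N))) ^ 2 + n) * (2 ^ 5 * 7 * n) := by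
      have := h
      push_cast at this
      exact Int.cast_injective (α := ℚ) (by push_cast at this ⊢; linarith)
    have h3 := mul_right_cancel₀ (mul_ne_zero (by norm_num : (2:ℤ)^5*7 ≠ 0) hn) h2
    set X : ℤ := (k : ℤ)
    set Y : ℤ := (k' : ℤ)
    set b : ℤ := (N : ℤ) with hb
    have hfac : (112 * n * (X - Y))
        * ((2 * (n + 2 * m)) + 112 * n * (X + Y + 2 * b)) = 0 := by nlinarith [h3]
    rcases mul_eq_zero.1 hfac with hc | hc
    · have h112 : (112 : ℤ) * n ≠ 0 := mul_ne_zero (by norm_num) hn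
      have hXY : X - Y = 0 := by
        rcases mul_eq_zero.1 hc with h' | h'
        · exact absurd h' h112
        · exact h'
      have : (k : ℤ) = (k' : ℤ) := by omega
      exact_mod_cast this
    · exfalso
      have hX0 : 0 ≤ X := Int.natCast_nonneg k
      have hY0 : 0 ≤ Y := Int.natCast_nonneg k'
      have heq : 2 * (n + 2 * m) = -(112 * n * (X + Y + 2 * b)) := by linarith
      have habs : A = 112 * |n| * (X + Y + 2 * b) := by
        rw [hA, heq, abs_neg, abs_mul, abs_mul]
        have : |X + Y + 2 * b| = X + Y + 2 * b := by
          rw [abs_of_nonneg]; positivity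
        rw [this]; norm_num
      have hn1 : 1 ≤ |n| := Int.one_le_abs hn
      have hbA : b = A + 1 := hNZ
      nlinarith [habs, hn1, hA0, hX0, hY0, hbA]
  constructor
  · exact Set.infinite_of_injective_forall_mem
      (f := fun k : ℕ => s (m + 56 * n * ((k + N : ℕ) : ℤ)))
      hinj (fun k => ⟨k + N, rfl⟩)
  · exact ⟨fun k => k + N, fun i j hij => Nat.add_lt_add_right hij N,
      fun k k' h => hinj h⟩
end

section
/- Fix integers a, b with a ≠ b, set λ = 2^3·3·7·|a-b|, and define s(a,b) = -(a+b+2)^2 / (2^5·7·(a-b)) + sgn(a-b)/(2^5·7) as a rational number. Then the sequence k ↦ s(a+kλ, b+kλ) takes infinitely many distinct values. -/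
/-- For fixed `a ≠ b`, `λ = 2^3·3·7·|a-b|` and
`s(a,b) = -(a+b+2)^2/(2^5·7·(a-b)) + sgn(a-b)/(2^5·7)`, the sequence
`k ↦ s(a+kλ, b+kλ)` takes infinitely many distinct values. -/
theorem stmt7 (a b lam : ℤ) (hab : a ≠ b) (hlam : lam = 2 ^ 3 * 3 * 7 * |a - b|)
    (s : ℤ → ℤ → ℚ)
    (hs : ∀ x y : ℤ, x ≠ y →
      s x y = -(((x + y + 2) ^ 2 : ℤ) : ℚ) / ((2 ^ 5 * 7 * (x - y) : ℤ) : ℚ) +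
        (((x - y).sign : ℤ) : ℚ) / (2 ^ 5 * 7)) :
    (Set.range fun k : ℕ => s (a + k * lam) (b + k * lam)).Infinite := by
  have habs : 0 < |a - b| := abs_pos.mpr (sub_ne_zero.mpr hab)
  have hlampos : 0 < lam := by rw [hlam]; positivity
  set N : ℕ := (|a + b + 2|).toNat + 1 with hN
  have hNbig : |a + b + 2| < (N : ℤ) := by
    simp only [hN]
    push_cast
    omega
  -- positivity of the base for shifted indices
  have hpos : ∀ n : ℕ, 0 < a + b + 2 + 2 * ((n + N : ℕ) : ℤ) * lam := by
    intro n
    have h1 : (N : ℤ) ≤ ((n + N : ℕ) : ℤ) := by exact_mod_cast Nat.le_add_left N n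
    have h2 : -(a + b + 2) ≤ |a + b + 2| := neg_le_abs _
    nlinarith
  have hne : ∀ k : ℕ, a + (k : ℤ) * lam ≠ b + (k : ℤ) * lam := by
    intro k h
    exact hab (by linarith [add_right_cancel h])
  have hval : ∀ k : ℕ, s (a + k * lam) (b + k * lam) =
      -(((a + b + 2 + 2 * (k : ℤ) * lam) ^ 2 : ℤ) : ℚ) / ((2 ^ 5 * 7 * (a - b) : ℤ) : ℚ) +
        (((a - b).sign : ℤ) : ℚ) / (2 ^ 5 * 7) := by
    intro k
    rw [hs _ _ (hne k)]
    congr 2 <;> ring_nf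
  have hD : ((2 ^ 5 * 7 * (a - b) : ℤ) : ℚ) ≠ 0 := by
    have : (2 ^ 5 * 7 * (a - b) : ℤ) ≠ 0 := by
      have := sub_ne_zero.mpr hab
      intro h
      rcases mul_eq_zero.mp h with h | h
      · norm_num at h
      · exact this h
    exact_mod_cast this
  apply Set.infinite_of_injective_forall_mem
    (f := fun n : ℕ => s (a + ((n + N : ℕ) : ℤ) * lam) (b + ((n + N : ℕ) : ℤ) * lam))
  · intro n1 n2 h
    simp only [hval] at h
    have h2 : (((a + b + 2 + 2 * ((n1 + N : ℕ) : ℤ) * lam) ^ 2 : ℤ) : ℚ)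
        = (((a + b + 2 + 2 * ((n2 + N : ℕ) : ℤ) * lam) ^ 2 : ℤ) : ℚ) := by
      have h' : -(((a + b + 2 + 2 * ((n1 + N : ℕ) : ℤ) * lam) ^ 2 : ℤ) : ℚ) / ((2 ^ 5 * 7 * (a - b) : ℤ) : ℚ)
          = -(((a + b + 2 + 2 * ((n2 + N : ℕ) : ℤ) * lam) ^ 2 : ℤ) : ℚ) / ((2 ^ 5 * 7 * (a - b) : ℤ) : ℚ) := by
        linarith
      have h'' := congrArg (fun t => t * ((2 ^ 5 * 7 * (a - b) : ℤ) : ℚ)) h'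
      simp only [div_mul_cancel₀ _ hD, neg_inj] at h''
      exact h''
    have h3 : (a + b + 2 + 2 * ((n1 + N : ℕ) : ℤ) * lam) ^ 2
        = (a + b + 2 + 2 * ((n2 + N : ℕ) : ℤ) * lam) ^ 2 := by exact_mod_cast h2
    have p1 := hpos n1
    have p2 := hpos n2
    have h4 : (a + b + 2 + 2 * ((n1 + N : ℕ) : ℤ) * lam)
        = (a + b + 2 + 2 * ((n2 + N : ℕ) : ℤ) * lam) := by nlinarith
    have h5 : ((n1 + N : ℕ) : ℤ) = ((n2 + N : ℕ) : ℤ) := by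
      have hl : lam ≠ 0 := ne_of_gt hlampos
      have := mul_right_cancel₀ hl (by linarith : 2 * ((n1 + N : ℕ) : ℤ) * lam = 2 * ((n2 + N : ℕ) : ℤ) * lam)
      omega
    omega
  · intro n
    exact ⟨n + N, rfl⟩
end

section
/- Let a, b, t be integers with t(a+b)^2 ≠ ab. Define s(a,b,t) = (a+b)(1-t)^2/(2^3·7·(t(a+b)^2-ab)) + (-3ab + (1-t)(8+(a+b)^2))/(2^5·3·7) + σ/(2^5·7), where σ = 0 if ab - t(a+b)^2 < 0, σ = 2 if ab - t(a+b)^2 > 0 and a+b > 0, and σ = -2 if ab - t(a+b)^2 > 0 and a+b < 0. With r = t(a+b)^2 - ab, λ = 2^5·3·7·r, a_k = a+(a+b)^2λk, b_k = b-(a+b)^2λk, t_k = t-(a-b)λk-(a+b)^2λ^2k^2, the sequence k ↦ s(a_k,b_k,t_k) takes infinitely many distinct values. -/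
/-- For `t(a+b)^2 ≠ ab`, with
`s(a,b,t) = (a+b)(1-t)^2/(2^3·7·(t(a+b)^2-ab)) + (-3ab+(1-t)(8+(a+b)^2))/(2^5·3·7) + σ/(2^5·7)`,
`r = t(a+b)^2 - ab`, `λ = 2^5·3·7·r`, and the sequence
`a_k = a+(a+b)^2λk`, `b_k = b-(a+b)^2λk`, `t_k = t-(a-b)λk-(a+b)^2λ^2k^2`,
the values `s(a_k,b_k,t_k)` are infinitely many distinct rationals. -/
theorem stmt11 (a b t : ℤ) (h : t * (a + b) ^ 2 ≠ a * b)
    (σ : ℤ → ℤ → ℤ → ℚ)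
    (hσ1 : ∀ A B T : ℤ, A * B - T * (A + B) ^ 2 < 0 → σ A B T = 0)
    (hσ2 : ∀ A B T : ℤ, 0 < A * B - T * (A + B) ^ 2 → 0 < A + B → σ A B T = 2)
    (hσ3 : ∀ A B T : ℤ, 0 < A * B - T * (A + B) ^ 2 → A + B < 0 → σ A B T = -2)
    (sInv : ℤ → ℤ → ℤ → ℚ)
    (hs : ∀ A B T : ℤ, T * (A + B) ^ 2 ≠ A * B →
      sInv A B T =
        ((A + B : ℤ) : ℚ) * ((1 - (T : ℚ)) ^ 2) /
            ((2 ^ 3 * 7 : ℚ) * (((T * (A + B) ^ 2 - A * B : ℤ)) : ℚ)) +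
          (-3 * (A : ℚ) * (B : ℚ) + (1 - (T : ℚ)) * (8 + ((A + B : ℤ) : ℚ) ^ 2)) /
            (2 ^ 5 * 3 * 7) +
          σ A B T / (2 ^ 5 * 7))
    (r lam : ℤ) (hr : r = t * (a + b) ^ 2 - a * b) (hlam : lam = 2 ^ 5 * 3 * 7 * r) :
    (Set.range fun k : ℕ =>
      sInv (a + (a + b) ^ 2 * lam * k) (b - (a + b) ^ 2 * lam * k)
        (t - (a - b) * lam * k - (a + b) ^ 2 * lam ^ 2 * (k : ℤ) ^ 2)).Infinite := by
  have hr0 : r ≠ 0 := by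
    rw [hr]; exact sub_ne_zero.mpr h
  have hrQ : ((r : ℤ) : ℚ) ≠ 0 := Int.cast_ne_zero.mpr hr0
  have hlam0 : lam ≠ 0 := by
    rw [hlam]; exact mul_ne_zero (by norm_num) hr0
  have hlamQ : ((lam : ℤ) : ℚ) ≠ 0 := Int.cast_ne_zero.mpr hlam0
  -- abbreviations
  set A : ℕ → ℤ := fun k => a + (a + b) ^ 2 * lam * k with hA
  set B : ℕ → ℤ := fun k => b - (a + b) ^ 2 * lam * k with hB
  set T : ℕ → ℤ := fun k => t - (a - b) * lam * k - (a + b) ^ 2 * lam ^ 2 * (k : ℤ) ^ 2 with hT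
  -- the key invariance
  have hkey : ∀ k : ℕ, T k * (A k + B k) ^ 2 - A k * B k = t * (a + b) ^ 2 - a * b := by
    intro k; simp only [hA, hB, hT]; ring
  have hsum : ∀ k : ℕ, A k + B k = a + b := by
    intro k; simp only [hA, hB]; ring
  have hne : ∀ k : ℕ, T k * (A k + B k) ^ 2 ≠ A k * B k := by
    intro k hEq
    apply h
    have := hkey k
    omega
  -- the sigma term is constant
  have hσc : ∀ k : ℕ, σ (A k) (B k) (T k) = σ a b t := by
    intro k
    have hk := hkey k
    rcases lt_trichotomy (a * b - t * (a + b) ^ 2) 0 with hlt | heq | hgt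
    · rw [hσ1 (A k) (B k) (T k) (by omega), hσ1 a b t hlt]
    · exact absurd (by omega : t * (a + b) ^ 2 = a * b) h
    · have hs0 : a + b ≠ 0 := by
        intro h0
        have hb : b = -a := by omega
        have h1 : t * (a + b) ^ 2 = 0 := by rw [h0]; ring
        have h2 : a * b ≤ 0 := by rw [hb]; nlinarith [sq_nonneg a]
        linarith
      rcases lt_or_gt_of_ne hs0 with hneg | hpos
      · rw [hσ3 (A k) (B k) (T k) (by omega) (by rw [hsum k]; exact hneg),
          hσ3 a b t hgt hneg]
      · rw [hσ2 (A k) (B k) (T k) (by omega) (by rw [hsum k]; exact hpos),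
          hσ2 a b t hgt hpos]
  -- rational coefficients of the polynomial
  set qa : ℚ := (a : ℚ)
  set qb : ℚ := (b : ℚ)
  set qt : ℚ := (t : ℚ)
  set ql : ℚ := (lam : ℚ)
  set qr : ℚ := (r : ℚ)
  set qs : ℚ := qa + qb with hqs
  set c4 : ℚ := qs ^ 5 * ql ^ 4 / (56 * qr) with hc4
  set c3 : ℚ := qs ^ 3 * (qa - qb) * ql ^ 3 / (28 * qr) with hc3
  set c2 : ℚ := qs * ((qa - qb) ^ 2 + 2 * (1 - qt) * qs ^ 2) * ql ^ 2 / (56 * qr) +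
      (3 * qs ^ 4 + qs ^ 2 * (8 + qs ^ 2)) * ql ^ 2 / 672 with hc2
  set c1 : ℚ := 2 * qs * (1 - qt) * (qa - qb) * ql / (56 * qr) +
      ((qa - qb) * (8 + qs ^ 2) + 3 * (qa - qb) * qs ^ 2) * ql / 672 with hc1
  set c0 : ℚ := qs * (1 - qt) ^ 2 / (56 * qr) +
      (-3 * qa * qb + (1 - qt) * (8 + qs ^ 2)) / 672 + σ a b t / 224 with hc0
  set P : Polynomial ℚ := Polynomial.C c4 * Polynomial.X ^ 4 + Polynomial.C c3 * Polynomial.X ^ 3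
      + Polynomial.C c2 * Polynomial.X ^ 2 + Polynomial.C c1 * Polynomial.X + Polynomial.C c0
      with hP
  set f : ℕ → ℚ := fun k =>
      sInv (a + (a + b) ^ 2 * lam * k) (b - (a + b) ^ 2 * lam * k)
        (t - (a - b) * lam * k - (a + b) ^ 2 * lam ^ 2 * (k : ℤ) ^ 2) with hf
  have hrq : qr = qt * qs ^ 2 - qa * qb := by
    simp only [hqs]
    rw [show qr = ((r : ℤ) : ℚ) from rfl, hr]
    push_cast
    ring
  have heval : ∀ k : ℕ, f k = P.eval (k : ℚ) := by
    intro k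
    have hfk : f k = sInv (A k) (B k) (T k) := rfl
    rw [hfk, hs (A k) (B k) (T k) (hne k), hσc k]
    have hrk : ((T k * (A k + B k) ^ 2 - A k * B k : ℤ) : ℚ) = qr := by
      rw [hkey k, show qr = ((r : ℤ) : ℚ) from rfl, hr]
    rw [hrk]
    have hAq : ((A k : ℤ) : ℚ) = qa + qs ^ 2 * ql * k := by
      simp only [hA, hqs]; push_cast; ring
    have hBq : ((B k : ℤ) : ℚ) = qb - qs ^ 2 * ql * k := by
      simp only [hB, hqs]; push_cast; ring
    have hTq : ((T k : ℤ) : ℚ) = qt - (qa - qb) * ql * k - qs ^ 2 * ql ^ 2 * (k : ℚ) ^ 2 := by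
      simp only [hT, hqs]; push_cast; ring
    have hABq : ((A k + B k : ℤ) : ℚ) = qs := by
      rw [hsum k]; simp [hqs]; rfl
    rw [hABq]
    push_cast [hAq, hBq, hTq]
    simp only [hP, hc4, hc3, hc2, hc1, hc0, Polynomial.eval_add, Polynomial.eval_mul,
      Polynomial.eval_pow, Polynomial.eval_C, Polynomial.eval_X]
    have h56 : (56 : ℚ) * qr ≠ 0 := by
      simp only [ne_eq, mul_eq_zero]
      push_neg
      exact ⟨by norm_num, hrQ⟩
    field_simp
    ring
  -- P is not a constant polynomial
  have hPco : ∀ v : ℚ, P ≠ Polynomial.C v := by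
    intro v hPC
    by_cases hqs0 : qs = 0
    · -- then the coefficient of X is nonzero
      have hab : b = -a := by
        have : (a : ℚ) + (b : ℚ) = 0 := hqs0
        have : ((a + b : ℤ) : ℚ) = 0 := by push_cast; linarith
        have := Int.cast_injective (α := ℚ) (this.trans (Int.cast_zero).symm)
        omega
      have ha0 : a ≠ 0 := by
        intro h0
        apply hr0
        rw [hr, hab, h0]; ring
      have hcoeff : P.coeff 1 = c1 := by
        simp [hP, Polynomial.coeff_one, Polynomial.coeff_X]
      have hc1z : c1 = 0 := by
        rw [← hcoeff, hPC, Polynomial.coeff_C]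
        norm_num
      have hqab : qa - qb = 2 * qa := by
        simp only [qa, qb, hab]; push_cast; ring
      rw [hc1, hqs0, hqab] at hc1z
      have hqa0 : qa ≠ 0 := Int.cast_ne_zero.mpr ha0
      field_simp at hc1z
      simp [hqa0, hlamQ, hrQ] at hc1z
    · -- then the coefficient of X^4 is nonzero
      have hcoeff : P.coeff 4 = c4 := by
        simp [hP, Polynomial.coeff_one, Polynomial.coeff_X]
      have hc4z : c4 = 0 := by
        rw [← hcoeff, hPC, Polynomial.coeff_C]
        norm_num
      rw [hc4] at hc4z
      have : qs ^ 5 * ql ^ 4 ≠ 0 := by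
        exact mul_ne_zero (pow_ne_zero _ hqs0) (pow_ne_zero _ hlamQ)
      apply this
      field_simp at hc4z
      rw [hc4z]; ring
  -- conclude
  by_contra hfin
  rw [Set.not_infinite] at hfin
  haveI : Finite ↥(Set.range f) := hfin.to_subtype
  obtain ⟨y, hy⟩ := Finite.exists_infinite_fiber (Set.rangeFactorization f)
  have hSinf : Set.Infinite {k : ℕ | f k = (y : ℚ)} := by
    have hset : (Set.rangeFactorization f ⁻¹' {y}) = {k : ℕ | f k = (y : ℚ)} := by
      ext k
      simp [Set.rangeFactorization, Subtype.ext_iff]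
    rw [← hset]
    exact Set.infinite_coe_iff.mp hy
  have hroots : Set.Infinite {x : ℚ | (P - Polynomial.C (y : ℚ)).IsRoot x} := by
    apply Set.Infinite.mono (s := (fun k : ℕ => (k : ℚ)) '' {k : ℕ | f k = (y : ℚ)})
    · rintro x ⟨k, hk, rfl⟩
      simp only [Set.mem_setOf_eq, Polynomial.IsRoot, Polynomial.eval_sub, Polynomial.eval_C]
      rw [← heval k, hk]
      ring
    · exact Set.Infinite.image (fun x _ y _ hxy => Nat.cast_injective hxy) hSinf
  have := Polynomial.eq_zero_of_infinite_isRoot _ hroots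
  have hPC : P = Polynomial.C (y : ℚ) := by
    have := sub_eq_zero.mp this
    exact this
  exact hPco _ hPC
end
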